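/- Let S → T be a ring homomorphism and u ∈ T a left regular element (left multiplication by u is injective). Suppose (a) T is flat as a right S-module, and (b) for every finitely generated left S-module M, the module T ⊗_S M has no u-torsion (left multiplication by u is injective on T ⊗_S M). Then W := T/uT is also flat as a right S-module. -/

import Mathlib

open scoped TensorProduct
open MulOpposite

universe u v

section RTensorLib

variable (S : Type*) [Ring S]

/-- The relations defining the balanced tensor product `P ⊗_S M` of a right `S`-module `P`
(a module over `Sᵐᵒᵖ`) and a left `S`-module `M` as a quotient of `P ⊗_ℤ M`. -/
noncomputable def tensorRel (P M : Type*) [AddCommGroup P] [Module Sᵐᵒᵖ P]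
    [AddCommGroup M] [Module S M] : Submodule ℤ (P ⊗[ℤ] M) :=
  Submodule.span ℤ
    {z | ∃ (p : P) (s : S) (m : M), z = (op s • p) ⊗ₜ[ℤ] m - p ⊗ₜ[ℤ] (s • m)}

/-- The balanced tensor product `P ⊗_S M` over the (possibly noncommutative) ring `S`. -/
noncomputable abbrev RTensor (P M : Type*) [AddCommGroup P] [Module Sᵐᵒᵖ P]
    [AddCommGroup M] [Module S M] : Type _ :=
  (P ⊗[ℤ] M) ⧸ tensorRel S P M

/-- Functoriality of `P ⊗_S −` in left `S`-module maps. -/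
noncomputable def RTensor.map (P : Type*) [AddCommGroup P] [Module Sᵐᵒᵖ P]
    {M N : Type*} [AddCommGroup M] [Module S M] [AddCommGroup N] [Module S N]
    (g : M →ₗ[S] N) : RTensor S P M →ₗ[ℤ] RTensor S P N :=
  Submodule.mapQ _ _ (LinearMap.lTensor P (g.restrictScalars ℤ)) (by
    unfold tensorRel
    rw [Submodule.span_le]
    rintro z ⟨p, s, m, rfl⟩
    apply Submodule.mem_comap.2
    apply Submodule.subset_span
    exact ⟨p, s, g m, by
      erw [LinearMap.map_sub, LinearMap.lTensor_tmul, LinearMap.lTensor_tmul]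
      simp [LinearMap.map_smul]⟩)

/-- Functoriality of `− ⊗_S M` in right `S`-module maps. -/
noncomputable def RTensor.mapLeft {P Q : Type*} [AddCommGroup P] [Module Sᵐᵒᵖ P]
    [AddCommGroup Q] [Module Sᵐᵒᵖ Q] (h : P →ₗ[Sᵐᵒᵖ] Q)
    (M : Type*) [AddCommGroup M] [Module S M] :
    RTensor S P M →ₗ[ℤ] RTensor S Q M :=
  Submodule.mapQ _ _ (LinearMap.rTensor M (h.restrictScalars ℤ)) (by
    unfold tensorRel
    rw [Submodule.span_le]
    rintro z ⟨p, s, m, rfl⟩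
    apply Submodule.mem_comap.2
    apply Submodule.subset_span
    exact ⟨h p, s, m, by
      erw [LinearMap.map_sub, LinearMap.rTensor_tmul, LinearMap.rTensor_tmul]
      simp [LinearMap.map_smul]⟩)

/-- A right `S`-module `P` is flat if `P ⊗_S −` preserves injectivity of maps of left
`S`-modules.  (This is equivalent to `Tor₁^S(P, M) = 0` for all (finitely generated)
left `S`-modules `M`.) -/
def IsRightFlat (P : Type*) [AddCommGroup P] [Module Sᵐᵒᵖ P] : Prop :=
  ∀ (M N : Type u) [AddCommGroup M] [Module S M] [AddCommGroup N] [Module S N],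
    ∀ g : M →ₗ[S] N, Function.Injective g → Function.Injective (RTensor.map S P g)

/-- A left `S`-module `Q` is flat if `− ⊗_S Q` preserves injectivity of maps of right
`S`-modules. -/
def IsLeftFlat (Q : Type*) [AddCommGroup Q] [Module S Q] : Prop :=
  ∀ (P P' : Type u) [AddCommGroup P] [Module Sᵐᵒᵖ P] [AddCommGroup P'] [Module Sᵐᵒᵖ P'],
    ∀ h : P →ₗ[Sᵐᵒᵖ] P', Function.Injective h → Function.Injective (RTensor.mapLeft S h Q)

end RTensorLib

/-- The right `Sᵐᵒᵖ`-module structure on `T` induced by a ring homomorphism `f : S →+* T`: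
`op s • t = t * f s`. -/
noncomputable def Module.ofRingHomRight {S T : Type*} [Ring S] [Ring T] (f : S →+* T) :
    Module Sᵐᵒᵖ T :=
  Module.compHom T (RingHom.op f)

section Statement4

variable {S T : Type*} [Ring S] [Ring T]

/-- The left ideal `uT` of `T`, viewed as a submodule for the right `S`-action
`op s • t = t * f s`. -/
noncomputable def uLeftIdeal (f : S →+* T) (u : T) [Module Sᵐᵒᵖ T]
    (hact : ∀ (s : S) (t : T), op s • t = t * f s) : Submodule Sᵐᵒᵖ T where
  carrier := {x | ∃ t, x = u * t}
  add_mem' := by rintro a b ⟨t₁, rfl⟩ ⟨t₂, rfl⟩; exact ⟨t₁ + t₂, by rw [mul_add]⟩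
  zero_mem' := ⟨0, by simp⟩
  smul_mem' := by
    rintro c x ⟨t, rfl⟩
    refine ⟨t * f c.unop, ?_⟩
    have h := hact c.unop (u * t)
    rw [op_unop] at h
    rw [h, mul_assoc]

/-- Left multiplication by `u ∈ T` on the balanced tensor product `T ⊗_S M`. -/
noncomputable def uMulTensor (f : S →+* T) (u : T) [Module Sᵐᵒᵖ T]
    (hact : ∀ (s : S) (t : T), op s • t = t * f s)
    (M : Type*) [AddCommGroup M] [Module S M] :
    RTensor S T M →ₗ[ℤ] RTensor S T M :=
  Submodule.mapQ _ _ (LinearMap.rTensor M (LinearMap.mulLeft ℤ u)) (by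
    unfold tensorRel
    rw [Submodule.span_le]
    rintro z ⟨p, s, m, rfl⟩
    apply Submodule.mem_comap.2
    apply Submodule.subset_span
    refine ⟨u * p, s, m, ?_⟩
    erw [LinearMap.map_sub, LinearMap.rTensor_tmul, LinearMap.rTensor_tmul]
    simp [LinearMap.mulLeft_apply, hact, mul_assoc])

section AuxHelpers

variable {S' : Type*} [Ring S']

lemma RTensor.map_mk_tmul (P : Type*) [AddCommGroup P] [Module S'ᵐᵒᵖ P]
    {M N : Type*} [AddCommGroup M] [Module S' M] [AddCommGroup N] [Module S' N]
    (g : M →ₗ[S'] N) (p : P) (m : M) :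
    RTensor.map S' P g (Submodule.Quotient.mk (p ⊗ₜ[ℤ] m)) =
      Submodule.Quotient.mk (p ⊗ₜ[ℤ] g m) := by
  exact rfl

lemma RTensor.mapLeft_mk_tmul {P Q : Type*} [AddCommGroup P] [Module S'ᵐᵒᵖ P]
    [AddCommGroup Q] [Module S'ᵐᵒᵖ Q] (h : P →ₗ[S'ᵐᵒᵖ] Q)
    (M : Type*) [AddCommGroup M] [Module S' M] (p : P) (m : M) :
    RTensor.mapLeft S' h M (Submodule.Quotient.mk (p ⊗ₜ[ℤ] m)) =
      Submodule.Quotient.mk (h p ⊗ₜ[ℤ] m) := by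
  exact rfl

lemma rt_hom_ext {P M A : Type*} [AddCommGroup P] [Module S'ᵐᵒᵖ P]
    [AddCommGroup M] [Module S' M] [AddCommGroup A]
    {φ ψ : RTensor S' P M →ₗ[ℤ] A}
    (h : ∀ (p : P) (m : M), φ (Submodule.Quotient.mk (p ⊗ₜ[ℤ] m)) =
      ψ (Submodule.Quotient.mk (p ⊗ₜ[ℤ] m))) : φ = ψ := by
  apply Submodule.linearMap_qext
  exact TensorProduct.ext' h

/-- Exactness of `P ⊗_S -` at the middle spot, given an exact pair `g, q` with `q`
surjective. -/
lemma rt_map_exact (P : Type*) [AddCommGroup P] [Module S'ᵐᵒᵖ P]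
    {M N C : Type*} [AddCommGroup M] [Module S' M] [AddCommGroup N] [Module S' N]
    [AddCommGroup C] [Module S' C]
    (g : M →ₗ[S'] N) (q : N →ₗ[S'] C) (hq : Function.Surjective q)
    (hexact : Function.Exact g q) {b : RTensor S' P N}
    (hb : RTensor.map S' P q b = 0) : ∃ a, RTensor.map S' P g a = b := by
  obtain ⟨b', rfl⟩ := Submodule.Quotient.mk_surjective _ b
  erw [RTensor.map, Submodule.mapQ_apply, Submodule.Quotient.mk_eq_zero] at hb
  have key : tensorRel S' P C =
      Submodule.map (LinearMap.lTensor P (q.restrictScalars ℤ)) (tensorRel S' P N) := by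
    unfold tensorRel
    erw [Submodule.map_span]
    congr 1
    ext z
    constructor
    · rintro ⟨p, s, c, rfl⟩
      obtain ⟨n, rfl⟩ := hq c
      refine ⟨(op s • p) ⊗ₜ[ℤ] n - p ⊗ₜ[ℤ] (s • n), ⟨p, s, n, rfl⟩, ?_⟩
      simp [map_sub, LinearMap.lTensor_tmul, map_smul]
    · rintro ⟨w, ⟨p, s, n, rfl⟩, rfl⟩
      exact ⟨p, s, q n, by simp [map_sub, LinearMap.lTensor_tmul, map_smul]⟩
  rw [key] at hb
  obtain ⟨r, hrmem, hr⟩ := hb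
  have hexℤ : Function.Exact (g.restrictScalars ℤ) (q.restrictScalars ℤ) := hexact
  have hten := lTensor_exact (f := g.restrictScalars ℤ)
    (g := q.restrictScalars ℤ) P hexℤ hq
  have hker : LinearMap.lTensor P (q.restrictScalars ℤ) (b' - r) = 0 := by
    erw [map_sub, hr, sub_self]
  obtain ⟨c, hc⟩ := (hten _).mp hker
  refine ⟨Submodule.Quotient.mk c, ?_⟩
  erw [RTensor.map, Submodule.mapQ_apply, hc]
  rw [← sub_eq_zero, ← Submodule.Quotient.mk_sub, Submodule.Quotient.mk_eq_zero]
  simpa using Submodule.neg_mem _ hrmem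

lemma rt_mapLeft_surjective {P Q : Type*} [AddCommGroup P] [Module S'ᵐᵒᵖ P]
    [AddCommGroup Q] [Module S'ᵐᵒᵖ Q] (h : P →ₗ[S'ᵐᵒᵖ] Q)
    (hs : Function.Surjective h)
    (M : Type*) [AddCommGroup M] [Module S' M] :
    Function.Surjective (RTensor.mapLeft S' h M) := by
  intro x
  obtain ⟨x', rfl⟩ := Submodule.Quotient.mk_surjective _ x
  obtain ⟨y, hy⟩ := LinearMap.rTensor_surjective (g := h.restrictScalars ℤ) M hs x'
  exact ⟨Submodule.Quotient.mk y, by erw [RTensor.mapLeft, Submodule.mapQ_apply, hy]⟩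

end AuxHelpers

section MainHelpers

variable (f : S →+* T) (u : T) [Module Sᵐᵒᵖ T]
    (hact : ∀ (s : S) (t : T), op s • t = t * f s)

lemma uMulTensor_mk_tmul (M : Type*) [AddCommGroup M] [Module S M] (t : T) (m : M) :
    uMulTensor f u hact M (Submodule.Quotient.mk (t ⊗ₜ[ℤ] m)) =
      Submodule.Quotient.mk ((u * t) ⊗ₜ[ℤ] m) := by
  exact rfl

/-- Naturality of `u`-multiplication in the module variable. -/
lemma uMulTensor_natural {M N : Type*} [AddCommGroup M] [Module S M]
    [AddCommGroup N] [Module S N] (g : M →ₗ[S] N) (x : RTensor S T M) :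
    RTensor.map S T g (uMulTensor f u hact M x) =
      uMulTensor f u hact N (RTensor.map S T g x) := by
  have := rt_hom_ext (φ := (RTensor.map S T g).comp (uMulTensor f u hact M))
    (ψ := (uMulTensor f u hact N).comp (RTensor.map S T g)) (fun t m => by
      simp [LinearMap.comp_apply, uMulTensor_mk_tmul, RTensor.map_mk_tmul])
  exact LinearMap.congr_fun this x

/-- The quotient map `T → T/uT` as a map of right `S`-modules. -/
noncomputable def uPi : T →ₗ[Sᵐᵒᵖ] (T ⧸ uLeftIdeal f u hact) :=
  (uLeftIdeal f u hact).mkQ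

/-- Naturality of `- ⊗ M → - ⊗ N` versus the projection `T → W`. -/
lemma uPi_natural {M N : Type*} [AddCommGroup M] [Module S M]
    [AddCommGroup N] [Module S N] (g : M →ₗ[S] N) (x : RTensor S T M) :
    RTensor.mapLeft S (uPi f u hact) N (RTensor.map S T g x) =
      RTensor.map S (T ⧸ uLeftIdeal f u hact) g
        (RTensor.mapLeft S (uPi f u hact) M x) := by
  have := rt_hom_ext
    (φ := (RTensor.mapLeft S (uPi f u hact) N).comp (RTensor.map S T g))
    (ψ := (RTensor.map S (T ⧸ uLeftIdeal f u hact) g).comp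
      (RTensor.mapLeft S (uPi f u hact) M)) (fun t m => by
      simp [LinearMap.comp_apply, RTensor.map_mk_tmul, RTensor.mapLeft_mk_tmul])
  exact LinearMap.congr_fun this x

lemma uPi_exactZ : Function.Exact (LinearMap.mulLeft ℤ u)
    ((uPi f u hact).restrictScalars ℤ) := by
  intro t
  constructor
  · intro ht
    have : t ∈ uLeftIdeal f u hact := by
      simpa [uPi, Submodule.Quotient.mk_eq_zero] using ht
    obtain ⟨s, rfl⟩ := this
    exact ⟨s, rfl⟩
  · rintro ⟨s, rfl⟩
    simp only [LinearMap.mulLeft_apply, LinearMap.restrictScalars_apply, uPi,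
      Submodule.mkQ_apply, Submodule.Quotient.mk_eq_zero]
    exact ⟨s, rfl⟩

/-- Exactness of the column `T⊗M → T⊗M → W⊗M` at the middle. -/
lemma uCol_exact (M : Type*) [AddCommGroup M] [Module S M] {x : RTensor S T M}
    (hx : RTensor.mapLeft S (uPi f u hact) M x = 0) :
    ∃ y, uMulTensor f u hact M y = x := by
  obtain ⟨x', rfl⟩ := Submodule.Quotient.mk_surjective _ x
  erw [RTensor.mapLeft, Submodule.mapQ_apply, Submodule.Quotient.mk_eq_zero] at hx
  have hsurj : Function.Surjective (uPi f u hact) := Submodule.mkQ_surjective _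
  have key : tensorRel S (T ⧸ uLeftIdeal f u hact) M =
      Submodule.map (LinearMap.rTensor M ((uPi f u hact).restrictScalars ℤ))
        (tensorRel S T M) := by
    unfold tensorRel
    erw [Submodule.map_span]
    congr 1
    ext z
    constructor
    · rintro ⟨p, s, m, rfl⟩
      obtain ⟨t, rfl⟩ := hsurj p
      refine ⟨(op s • t) ⊗ₜ[ℤ] m - t ⊗ₜ[ℤ] (s • m), ⟨t, s, m, rfl⟩, ?_⟩
      simp [map_sub, LinearMap.rTensor_tmul, map_smul]
    · rintro ⟨w, ⟨t, s, m, rfl⟩, rfl⟩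
      exact ⟨uPi f u hact t, s, m, by simp [map_sub, LinearMap.rTensor_tmul, map_smul]⟩
  rw [key] at hx
  obtain ⟨r, hrmem, hr⟩ := hx
  have hten := rTensor_exact (f := LinearMap.mulLeft ℤ u)
    (g := (uPi f u hact).restrictScalars ℤ) M (uPi_exactZ f u hact) hsurj
  have hker : LinearMap.rTensor M ((uPi f u hact).restrictScalars ℤ) (x' - r) = 0 := by
    erw [map_sub, hr, sub_self]
  obtain ⟨c, hc⟩ := (hten _).mp hker
  refine ⟨Submodule.Quotient.mk c, ?_⟩
  erw [uMulTensor, Submodule.mapQ_apply, hc]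
  rw [← sub_eq_zero, ← Submodule.Quotient.mk_sub, Submodule.Quotient.mk_eq_zero]
  simpa using Submodule.neg_mem _ hrmem

/-- The easy direction: the composite `T⊗M → T⊗M → W⊗M` vanishes. -/
lemma uCol_comp_zero (M : Type*) [AddCommGroup M] [Module S M] (y : RTensor S T M) :
    RTensor.mapLeft S (uPi f u hact) M (uMulTensor f u hact M y) = 0 := by
  have := rt_hom_ext
    (φ := (RTensor.mapLeft S (uPi f u hact) M).comp (uMulTensor f u hact M))
    (ψ := (0 : RTensor S T M →ₗ[ℤ] RTensor S (T ⧸ uLeftIdeal f u hact) M)) (fun t m => by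
      simp only [LinearMap.comp_apply, uMulTensor_mk_tmul, RTensor.mapLeft_mk_tmul,
        LinearMap.zero_apply]
      have hz : uPi f u hact (u * t) = 0 := by
        simp only [uPi, Submodule.mkQ_apply, Submodule.Quotient.mk_eq_zero]
        exact ⟨t, rfl⟩
      rw [hz, TensorProduct.zero_tmul, Submodule.Quotient.mk_zero])
  exact LinearMap.congr_fun this y

/-- Extension of the no-`u`-torsion hypothesis from finitely generated modules to
all modules, using flatness of `T`. -/
lemma htors_all (hflatT : IsRightFlat.{u} S T)
    (htors : ∀ (M : Type u) [AddCommGroup M] [Module S M], Module.Finite S M →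
      Function.Injective (uMulTensor f u hact M))
    (M : Type u) [AddCommGroup M] [Module S M] (x : RTensor S T M)
    (hx : uMulTensor f u hact M x = 0) : x = 0 := by
  classical
  obtain ⟨x', rfl⟩ := Submodule.Quotient.mk_surjective _ x
  obtain ⟨sset, rfl⟩ := TensorProduct.exists_finset x'
  set M₀ : Submodule S M := Submodule.span S (↑(sset.image Prod.snd) : Set M) with hM₀
  have hfin : Module.Finite S M₀ :=
    Module.Finite.span_of_finite S (Finset.finite_toSet _)
  have hmem : ∀ i ∈ sset, i.2 ∈ M₀ := fun i hi =>
    Submodule.subset_span (Finset.mem_image_of_mem Prod.snd hi)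
  set x₀ : RTensor S T M₀ := Submodule.Quotient.mk
    (∑ i ∈ sset.attach, i.1.1 ⊗ₜ[ℤ] (⟨i.1.2, hmem i.1 i.2⟩ : M₀)) with hx₀
  have hmap : RTensor.map S T M₀.subtype x₀ =
      Submodule.Quotient.mk (∑ i ∈ sset, i.1 ⊗ₜ[ℤ] i.2) := by
    erw [hx₀, RTensor.map, Submodule.mapQ_apply]
    congr 1
    erw [map_sum, ← Finset.sum_attach sset (fun i => i.1 ⊗ₜ[ℤ] i.2)]
    rfl
  have h1 : RTensor.map S T M₀.subtype (uMulTensor f u hact M₀ x₀) = 0 := by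
    rw [uMulTensor_natural, hmap, hx]
  have hinj := hflatT M₀ M M₀.subtype (Submodule.injective_subtype M₀)
  have h2 : uMulTensor f u hact M₀ x₀ = 0 := by
    apply hinj
    rw [h1, map_zero]
  have h3 : x₀ = 0 := by
    apply htors M₀ hfin
    rw [h2, map_zero]
  rw [← hmap, h3, map_zero]

end MainHelpers

set_option maxHeartbeats 1000000 in
/-- Let `S → T` be a ring homomorphism (so `T` is a right `S`-module via
`op s • t = t * f s`) and `u ∈ T` a left regular element.  Suppose
(a) `T` is flat as a right `S`-module, and
(b) for every finitely generated left `S`-module `M`, the module `T ⊗_S M` has no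
`u`-torsion.  Then `W := T/uT` is also flat as a right `S`-module. -/
theorem flat_quotient_by_regular_element (f : S →+* T) (u : T) [Module Sᵐᵒᵖ T]
    (hact : ∀ (s : S) (t : T), op s • t = t * f s)
    (hu : Function.Injective fun t : T => u * t)
    (hflatT : IsRightFlat.{u} S T)
    (htors : ∀ (M : Type u) [AddCommGroup M] [Module S M], Module.Finite S M →
      Function.Injective (uMulTensor f u hact M)) :
    IsRightFlat.{u} S (T ⧸ uLeftIdeal f u hact) := by
  intro M N _ _ _ _ g hg
  rw [← LinearMap.ker_eq_bot, LinearMap.ker_eq_bot']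
  intro x hx
  obtain ⟨a, rfl⟩ := rt_mapLeft_surjective (uPi f u hact)
    (Submodule.mkQ_surjective _) M x
  have h1 : RTensor.mapLeft S (uPi f u hact) N (RTensor.map S T g a) = 0 := by
    rw [uPi_natural, hx]
  obtain ⟨b, hb⟩ := uCol_exact f u hact N h1
  set q : N →ₗ[S] N ⧸ LinearMap.range g := (LinearMap.range g).mkQ with hq
  have hqg : ∀ (m : M), q (g m) = 0 := fun m => by
    simp [hq, Submodule.Quotient.mk_eq_zero, LinearMap.mem_range]
  have h2 : uMulTensor f u hact (N ⧸ LinearMap.range g) (RTensor.map S T q b) = 0 := by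
    rw [← uMulTensor_natural, hb]
    have hcomp := rt_hom_ext (φ := (RTensor.map S T q).comp (RTensor.map S T g))
      (ψ := (0 : RTensor S T M →ₗ[ℤ] RTensor S T (N ⧸ LinearMap.range g))) (fun t m => by
        simp only [LinearMap.comp_apply, RTensor.map_mk_tmul, LinearMap.zero_apply, hqg,
          TensorProduct.tmul_zero]
        exact (Submodule.Quotient.mk_eq_zero _).mpr (Submodule.zero_mem _))
    exact LinearMap.congr_fun hcomp a
  have h3 : RTensor.map S T q b = 0 :=
    htors_all f u hact hflatT htors _ _ h2
  have hex : Function.Exact g q := LinearMap.exact_iff.mpr (Submodule.ker_mkQ _)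
  obtain ⟨c, hc⟩ := rt_map_exact T g q (Submodule.mkQ_surjective _) hex h3
  have h4 : RTensor.map S T g a = RTensor.map S T g (uMulTensor f u hact M c) := by
    rw [uMulTensor_natural, hc, hb]
  have h5 : a = uMulTensor f u hact M c := hflatT M N g hg h4
  rw [h5, uCol_comp_zero]
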